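/- arXiv:1611.06080 — 5 statements merged into one kernel-verified Lean document; each statement's English description precedes it below -/
import Mathlib

section
/- Let d ∈ ℕ, let ℓ₁,…,ℓ_d > 0 be lengthscales, let σ_s² > 0, and let x, x' ∈ ℝ^d. Then the integral of the function r ↦ σ_s² · cos(2π · Σ_{j=1}^d r_j (x_j − x'_j)) with respect to the product measure ⨂_{j=1}^d of Gaussian measures with mean 0 and variance 1/(4π²ℓ_j²) equals σ_s² · exp(−(1/2) Σ_{j=1}^d (x_j − x'_j)²/ℓ_j²). -/
open MeasureTheory ProbabilityTheory Real
open Complex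

lemma aux_integral_pi_prod : ∀ (n : ℕ) (μ : Fin n → Measure ℝ), (∀ i, SigmaFinite (μ i)) →
    ∀ (f : Fin n → ℝ → ℂ),
    ∫ x : Fin n → ℝ, ∏ i, f i (x i) ∂Measure.pi μ = ∏ i, ∫ x, f i x ∂(μ i) := by
  intro n
  induction n with
  | zero =>
      intro μ _ f
      simp [Measure.pi_of_empty, integral_dirac, measureReal_def]
  | succ n ih =>
      intro μ hσ f
      haveI := hσ
      calc ∫ x : Fin (n+1) → ℝ, ∏ i, f i (x i) ∂Measure.pi μ
          = ∫ p : ℝ × (Fin n → ℝ), f 0 p.1 * ∏ i : Fin n, f i.succ (p.2 i)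
              ∂((μ 0).prod (Measure.pi fun i => μ i.succ)) := by
            rw [← ((measurePreserving_piFinSuccAbove μ 0).symm).integral_comp']
            simp_rw [MeasurableEquiv.piFinSuccAbove_symm_apply, Fin.insertNthEquiv,
              Fin.prod_univ_succ, Fin.insertNth_zero, Equiv.coe_fn_mk, Fin.cons_succ,
              Fin.zero_succAbove, cast_eq, Fin.cons_zero]
        _ = (∫ x, f 0 x ∂(μ 0)) * ∏ i : Fin n, ∫ x, f i.succ x ∂(μ i.succ) := by
            rw [MeasureTheory.integral_prod_mul (f := fun x => f 0 x)
              (g := fun y : Fin n → ℝ => ∏ i : Fin n, f i.succ (y i)),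
              ih _ (fun i => inferInstance)]
        _ = ∏ i, ∫ x, f i x ∂(μ i) := (Fin.prod_univ_succ fun i => ∫ x, f i x ∂(μ i)).symm

lemma aux_char_gaussian (v : NNReal) (hv : (0:ℝ) < v) (c : ℝ) :
    ∫ r : ℝ, Complex.exp (c * r * Complex.I) ∂(gaussianReal 0 v)
      = Complex.exp (-((v:ℝ) * c ^ 2 / 2)) := by
  have hv' : v ≠ 0 := by exact_mod_cast hv.ne'
  rw [gaussianReal_of_var_ne_zero 0 hv']
  have hmeas : Measurable fun x => (gaussianPDFReal 0 v x).toNNReal :=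
    (measurable_gaussianPDFReal 0 v).real_toNNReal
  have hpdf : gaussianPDF 0 v = fun x => ((gaussianPDFReal 0 v x).toNNReal : ENNReal) := rfl
  rw [hpdf, integral_withDensity_eq_integral_smul hmeas]
  have h2v : (0:ℝ) < 2 * π * v := by positivity
  have key : ∀ x : ℝ, (gaussianPDFReal 0 v x).toNNReal • Complex.exp (c * x * Complex.I)
      = ((Real.sqrt (2 * π * v))⁻¹ : ℂ) *
        Complex.exp ((-(1 / (2 * (v:ℝ))) : ℂ) * x ^ 2 + (c * Complex.I) * x + 0) := by
    intro x
    have hnn : 0 ≤ gaussianPDFReal 0 v x := gaussianPDFReal_nonneg 0 v x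
    rw [NNReal.smul_def, Real.coe_toNNReal _ hnn, gaussianPDFReal_def, Complex.real_smul]
    push_cast
    rw [mul_assoc]
    congr 1
    rw [← Complex.exp_add]
    congr 1
    push_cast
    have : (v:ℂ) ≠ 0 := by exact_mod_cast hv.ne'
    field_simp
    ring
  simp_rw [key]
  have hbre : ((-(1 / (2 * (v:ℝ))) : ℂ)).re < 0 := by
    rw [show ((-(1 / (2 * (v:ℝ)))) : ℂ) = ((-(1 / (2 * (v:ℝ))) : ℝ) : ℂ) by push_cast; ring,
      Complex.ofReal_re]
    have : (0:ℝ) < 1 / (2 * v) := by positivity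
    linarith
  rw [integral_const_mul, integral_cexp_quadratic hbre (c * Complex.I) 0]
  have hb : (π : ℂ) / -(-(1 / (2 * (v:ℝ)) : ℂ)) = ((2 * π * (v:ℝ) : ℝ) : ℂ) := by
    have : (v:ℂ) ≠ 0 := by exact_mod_cast hv.ne'
    rw [neg_neg]
    push_cast
    field_simp
  rw [hb]
  have hpow : ((2 * π * (v:ℝ) : ℝ) : ℂ) ^ (1/2 : ℂ) = (Real.sqrt (2 * π * (v:ℝ)) : ℂ) := by
    rw [show (1/2 : ℂ) = ((1/2 : ℝ) : ℂ) by norm_num, ← Complex.ofReal_cpow h2v.le,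
      Real.sqrt_eq_rpow]
  rw [hpow, ← mul_assoc]
  have hsq : Real.sqrt (2 * π * (v:ℝ)) ≠ 0 := by positivity
  rw [show ((Real.sqrt (2 * π * (v:ℝ)))⁻¹ : ℂ) * (Real.sqrt (2 * π * (v:ℝ)) : ℂ) = 1 by
      rw [← Complex.ofReal_inv, ← Complex.ofReal_mul, inv_mul_cancel₀ hsq, Complex.ofReal_one],
    one_mul]
  congr 1
  have hI : (↑c * Complex.I) ^ 2 = (-(c^2 : ℝ) : ℂ) := by
    push_cast
    rw [mul_pow, Complex.I_sq]
    ring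
  rw [hI]
  have : (v:ℂ) ≠ 0 := by exact_mod_cast hv.ne'
  push_cast
  field_simp
  ring

/-- The squared exponential kernel is the expectation of
`r ↦ σs² · cos (2π ⟨r, x − x'⟩)` when `r` is drawn from the product of the
coordinate Gaussian spectral measures `N(0, 1/(4π²ℓⱼ²))`. -/
theorem se_kernel_eq_integral_cos (d : ℕ) (ℓ : Fin d → ℝ) (hℓ : ∀ j, 0 < ℓ j)
    (σs2 : ℝ) (hσ : 0 < σs2) (x x' : Fin d → ℝ) :
    ∫ r : Fin d → ℝ,
        σs2 * Real.cos (2 * π * ∑ j, r j * (x j - x' j))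
        ∂(Measure.pi fun j =>
            gaussianReal 0 (Real.toNNReal (1 / (4 * π ^ 2 * (ℓ j) ^ 2))))
      = σs2 * Real.exp (-(1 / 2) * ∑ j, (x j - x' j) ^ 2 / (ℓ j) ^ 2) := by
  have hπ := Real.pi_pos
  set μ := fun j : Fin d => gaussianReal 0 (Real.toNNReal (1 / (4 * π ^ 2 * (ℓ j) ^ 2))) with hμ
  set c := fun j : Fin d => 2 * π * (x j - x' j) with hc
  set F := fun r : Fin d → ℝ => ∏ j, Complex.exp ((c j * r j : ℝ) * Complex.I) with hF
  have hvpos : ∀ j, (0:ℝ) < (Real.toNNReal (1 / (4 * π ^ 2 * (ℓ j) ^ 2)) : ℝ) := by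
    intro j
    rw [Real.coe_toNNReal _ (by positivity)]
    have := hℓ j
    positivity
  -- value of the complex integral
  have hint : ∫ r : Fin d → ℝ, F r ∂Measure.pi μ
      = (Real.exp (-(1 / 2) * ∑ j, (x j - x' j) ^ 2 / (ℓ j) ^ 2) : ℂ) := by
    rw [hF]
    rw [aux_integral_pi_prod d μ (fun i => inferInstance)
      (fun j t => Complex.exp ((c j * t : ℝ) * Complex.I))]
    have hfac : ∀ j, (∫ t : ℝ, Complex.exp ((c j * t : ℝ) * Complex.I) ∂μ j)
        = (Real.exp (-((x j - x' j) ^ 2 / (ℓ j) ^ 2 / 2)) : ℂ) := by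
      intro j
      have h1 : ∀ t : ℝ, ((c j * t : ℝ) : ℂ) * Complex.I = (c j : ℝ) * (t : ℝ) * Complex.I := by
        intro t; push_cast; ring
      simp_rw [h1]
      rw [hμ, aux_char_gaussian _ (hvpos j), Complex.ofReal_exp]
      congr 1
      have hv : ((1 / (4 * π ^ 2 * ℓ j ^ 2)).toNNReal : ℝ) = 1 / (4 * π ^ 2 * ℓ j ^ 2) :=
        Real.coe_toNNReal _ (by positivity)
      have hreal : -(((1 / (4 * π ^ 2 * ℓ j ^ 2)).toNNReal : ℝ) * (c j) ^ 2 / 2)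
          = -((x j - x' j) ^ 2 / ℓ j ^ 2 / 2) := by
        rw [hv, hc]
        have h2 := (hℓ j).ne'
        have h3 := hπ.ne'
        field_simp
        ring
      exact_mod_cast hreal
    simp_rw [hfac]
    rw [← Complex.ofReal_prod, ← Real.exp_sum]
    congr 1
    rw [Finset.mul_sum]
    exact congrArg rexp (Finset.sum_congr rfl fun j _ => by ring)
  -- integrability of F
  have hFcont : Continuous F := by
    simp only [hF]; fun_prop
  have hFnorm : ∀ r, ‖F r‖ = 1 := by
    intro r
    simp only [hF]
    simp only [norm_prod, Complex.norm_exp_ofReal_mul_I, Finset.prod_const_one]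
  have hFint : Integrable F (Measure.pi μ) := by
    refine (integrable_const (1:ℝ)).mono' hFcont.aestronglyMeasurable ?_
    filter_upwards with r using le_of_eq (hFnorm r)
  -- cos is the real part of F
  have hre : ∀ r : Fin d → ℝ,
      Real.cos (2 * π * ∑ j, r j * (x j - x' j)) = (F r).re := by
    intro r
    simp only [hF]
    rw [show (∏ j, Complex.exp ((c j * r j : ℝ) * Complex.I))
        = Complex.exp ((∑ j, c j * r j : ℝ) * Complex.I) by
      rw [← Complex.exp_sum]
      congr 1
      push_cast [Finset.sum_mul]
      rfl]
    rw [Complex.exp_ofReal_mul_I_re]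
    congr 1
    rw [hc, Finset.mul_sum]
    exact Finset.sum_congr rfl fun j _ => by ring
  simp_rw [hre]
  rw [MeasureTheory.integral_const_mul]
  rw [show ∫ r, (F r).re ∂Measure.pi μ = (∫ r, F r ∂Measure.pi μ).re from ?_]
  · rw [hint, Complex.ofReal_re]
  · simpa using integral_re hFint
end

section
/- Let m ∈ ℕ with m ≥ 1, let ℓ₁,…,ℓ_d > 0, σ_s² > 0, and x, x' ∈ ℝ^d. Let P denote the product (over i ∈ {1,…,m}) of m independent copies of the Gaussian spectral measure on ℝ^d whose coordinates are independent Gaussians with mean 0 and variance 1/(4π²ℓ_j²). Then the integral of (r₁,…,r_m) ↦ (σ_s²/m) Σ_{i=1}^m cos(2π⟨r_i, x − x'⟩) with respect to P equals σ_s² · exp(−(1/2) Σ_{j=1}^d (x_j − x'_j)²/ℓ_j²), i.e., the sampled spectral kernel estimator is an unbiased estimator of the squared exponential kernel. -/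
open MeasureTheory ProbabilityTheory Real

section Aux

lemma aux_pi_prod {𝕜 : Type*} [RCLike 𝕜] {ι : Type*} [Fintype ι] {E : ι → Type*}
    [∀ i, MeasurableSpace (E i)]
    (μ : ∀ i, Measure (E i)) [∀ i, SigmaFinite (μ i)] (f : ∀ i, E i → 𝕜) :
    ∫ x : ∀ i, E i, ∏ i, f i (x i) ∂Measure.pi μ = ∏ i, ∫ x, f i x ∂μ i := by
  letI : ∀ i, MeasureSpace (E i) := fun i => ⟨μ i⟩
  exact MeasureTheory.integral_fintype_prod_eq_prod f

lemma aux_charFun (v : NNReal) (t : ℝ) :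
    ∫ r : ℝ, Complex.exp ((t * r : ℝ) * Complex.I) ∂(gaussianReal 0 v)
      = (Real.exp (-(v : ℝ) * t ^ 2 / 2) : ℂ) := by
  rcases eq_or_ne v 0 with hv | hv
  · subst hv
    simp [gaussianReal_zero_var]
  · have hv' : (0 : ℝ) < (v : ℝ) := lt_of_le_of_ne v.coe_nonneg (by exact_mod_cast (Ne.symm hv))
    rw [gaussianReal_of_var_ne_zero _ hv]
    have hpdf : gaussianPDF 0 v
        = fun x => ((Real.toNNReal (gaussianPDFReal 0 v x) : NNReal) : ENNReal) := by
      ext x; simp [gaussianPDF, ENNReal.ofReal]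
    rw [hpdf, integral_withDensity_eq_integral_smul
      ((measurable_gaussianPDFReal 0 v).real_toNNReal) _]
    have heq : ∀ x : ℝ,
        (Real.toNNReal (gaussianPDFReal 0 v x)) • Complex.exp ((t * x : ℝ) * Complex.I)
        = ((Real.sqrt (2 * π * v) : ℝ) : ℂ)⁻¹
          * Complex.exp ((-(1 / (2 * (v:ℝ))) : ℂ) * x ^ 2 + ((t : ℂ) * Complex.I) * x + 0) := by
      intro x
      rw [NNReal.smul_def, Real.coe_toNNReal _ (gaussianPDFReal_nonneg 0 v x)]
      rw [gaussianPDFReal]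
      push_cast
      rw [Complex.real_smul]
      push_cast
      rw [mul_assoc]
      congr 1
      rw [← Complex.exp_add]
      congr 1
      have : ((v : ℝ) : ℂ) ≠ 0 := by exact_mod_cast hv'.ne'
      field_simp
      ring
    simp_rw [heq]
    rw [MeasureTheory.integral_const_mul]
    have hb : (-(1 / (2 * (v:ℝ))) : ℂ).re < 0 := by
      simp only [Complex.neg_re, Complex.ofReal_re]
      norm_num
      positivity
    rw [integral_cexp_quadratic hb ((t : ℂ) * Complex.I) 0]
    have hvc : ((v : ℝ) : ℂ) ≠ 0 := by exact_mod_cast hv'.ne'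
    have h1 : ((π:ℂ) / -(-(1 / (2 * (v:ℝ))) : ℂ)) = ((2 * π * v : ℝ) : ℂ) := by
      push_cast
      field_simp
    have h2 : (0 - ((t : ℂ) * Complex.I)^2 / (4 * (-(1 / (2 * (v:ℝ))) : ℂ)))
        = ((-(v : ℝ) * t ^ 2 / 2 : ℝ) : ℂ) := by
      push_cast
      field_simp
      ring_nf
      simp [Complex.I_sq]
    rw [h1, h2]
    have hpos : (0:ℝ) < 2 * π * v := by positivity
    have h3 : (((2 * π * v : ℝ) : ℂ)) ^ (1/2 : ℂ) = ((Real.sqrt (2 * π * v) : ℝ) : ℂ) := by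
      rw [show (1/2 : ℂ) = ((1/2 : ℝ) : ℂ) by norm_num, ← Complex.ofReal_cpow hpos.le,
        Real.sqrt_eq_rpow]
    rw [h3, Complex.ofReal_exp]
    have hne : ((Real.sqrt (2 * π * v) : ℝ) : ℂ) ≠ 0 := by
      exact_mod_cast (Real.sqrt_pos.mpr hpos).ne'
    rw [← mul_assoc, inv_mul_cancel₀ hne, one_mul]

lemma aux_cos_pi (d : ℕ) (v : Fin d → NNReal) (t : Fin d → ℝ) :
    ∫ r : Fin d → ℝ, Real.cos (∑ j, t j * r j)
        ∂(Measure.pi fun j => gaussianReal 0 (v j))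
      = Real.exp (-∑ j, (v j : ℝ) * t j ^ 2 / 2) := by
  have hcont : Continuous fun r : Fin d → ℝ => (∑ j, t j * r j : ℝ) :=
    continuous_finset_sum _ fun j _ => continuous_const.mul (continuous_apply j)
  have hint : Integrable
      (fun r : Fin d → ℝ => Complex.exp ((∑ j, t j * r j : ℝ) * Complex.I))
      (Measure.pi fun j => gaussianReal 0 (v j)) := by
    refine Integrable.mono' (integrable_const 1)
      ((Complex.continuous_exp.comp
        ((Complex.continuous_ofReal.comp hcont).mul continuous_const)).aestronglyMeasurable)
      (ae_of_all _ fun r => ?_)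
    rw [Complex.norm_exp]
    simp
  have key : ∫ r : Fin d → ℝ, Complex.exp ((∑ j, t j * r j : ℝ) * Complex.I)
      ∂(Measure.pi fun j => gaussianReal 0 (v j))
      = (Real.exp (-∑ j, (v j : ℝ) * t j ^ 2 / 2) : ℂ) := by
    have hprod : ∀ r : Fin d → ℝ, Complex.exp ((∑ j, t j * r j : ℝ) * Complex.I)
        = ∏ j, Complex.exp ((t j * r j : ℝ) * Complex.I) := by
      intro r
      rw [← Complex.exp_sum]
      congr 1
      push_cast
      rw [Finset.sum_mul]
    simp_rw [hprod]
    rw [aux_pi_prod (fun j : Fin d => gaussianReal 0 (v j))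
      (fun j r => Complex.exp ((t j * r : ℝ) * Complex.I))]
    simp_rw [aux_charFun]
    rw [← Complex.ofReal_prod, ← Real.exp_sum]
    congr 2
    rw [← Finset.sum_neg_distrib]
    exact Finset.sum_congr rfl fun j _ => by ring
  calc ∫ r : Fin d → ℝ, Real.cos (∑ j, t j * r j)
        ∂(Measure.pi fun j => gaussianReal 0 (v j))
      = ∫ r : Fin d → ℝ, (Complex.exp ((∑ j, t j * r j : ℝ) * Complex.I)).re
        ∂(Measure.pi fun j => gaussianReal 0 (v j)) := by
        simp_rw [Complex.exp_ofReal_mul_I_re]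
    _ = (∫ r : Fin d → ℝ, Complex.exp ((∑ j, t j * r j : ℝ) * Complex.I)
        ∂(Measure.pi fun j => gaussianReal 0 (v j))).re := by
        rw [← RCLike.re_eq_complex_re, ← integral_re hint]
    _ = Real.exp (-∑ j, (v j : ℝ) * t j ^ 2 / 2) := by rw [key, Complex.ofReal_re]

end Aux

/-- The sampled spectral kernel estimator built from `m` i.i.d. spectral
frequencies drawn from the Gaussian spectral measure is an unbiased estimator
of the squared exponential kernel. -/
theorem sampled_spectral_kernel_unbiased (d m : ℕ) (hm : 1 ≤ m)
    (ℓ : Fin d → ℝ) (hℓ : ∀ j, 0 < ℓ j) (σs2 : ℝ) (hσ : 0 < σs2)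
    (x x' : Fin d → ℝ) :
    ∫ R : Fin m → Fin d → ℝ,
        (σs2 / m) * ∑ i : Fin m, Real.cos (2 * π * ∑ j, R i j * (x j - x' j))
        ∂(Measure.pi fun _ : Fin m =>
            Measure.pi fun j : Fin d =>
              gaussianReal 0 (Real.toNNReal (1 / (4 * π ^ 2 * (ℓ j) ^ 2))))
      = σs2 * Real.exp (-(1 / 2) * ∑ j, (x j - x' j) ^ 2 / (ℓ j) ^ 2) := by
  set v : Fin d → NNReal := fun j => Real.toNNReal (1 / (4 * π ^ 2 * (ℓ j) ^ 2)) with hv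
  set μd : Measure (Fin d → ℝ) := Measure.pi fun j => gaussianReal 0 (v j) with hμd
  set t : Fin d → ℝ := fun j => 2 * π * (x j - x' j) with ht
  set F : (Fin d → ℝ) → ℝ := fun r => Real.cos (∑ j, t j * r j) with hFdef
  have hcontF : Continuous F :=
    Real.continuous_cos.comp (continuous_finset_sum _ fun j _ =>
      continuous_const.mul (continuous_apply j))
  -- the one-sample expectation
  have hF : ∫ r, F r ∂μd = Real.exp (-(1 / 2) * ∑ j, (x j - x' j) ^ 2 / (ℓ j) ^ 2) := by
    rw [hFdef, hμd, aux_cos_pi]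
    congr 1
    rw [neg_mul, neg_inj, Finset.mul_sum]
    apply Finset.sum_congr rfl
    intro j _
    have hℓj : ℓ j ≠ 0 := (hℓ j).ne'
    have hvj : ((v j : ℝ)) = 1 / (4 * π ^ 2 * (ℓ j) ^ 2) := by
      rw [hv]
      exact Real.coe_toNNReal _ (by positivity)
    rw [hvj, ht]
    have hπ : π ≠ 0 := Real.pi_ne_zero
    field_simp
    ring
  -- the per-index marginal integral
  have hmarg : ∀ i : Fin m,
      ∫ R : Fin m → Fin d → ℝ, Real.cos (2 * π * ∑ j, R i j * (x j - x' j))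
          ∂(Measure.pi fun _ : Fin m => μd)
        = ∫ r, F r ∂μd := by
    intro i
    have harg : ∀ R : Fin m → Fin d → ℝ,
        Real.cos (2 * π * ∑ j, R i j * (x j - x' j)) = F (R i) := by
      intro R
      rw [hFdef]
      congr 1
      rw [Finset.mul_sum]
      apply Finset.sum_congr rfl
      intro j _
      rw [ht]
      ring
    simp_rw [harg]
    have hsplit : ∀ R : Fin m → Fin d → ℝ,
        F (R i) = ∏ i' : Fin m, (if i' = i then F (R i') else 1) := by
      intro R
      rw [Finset.prod_ite_eq' Finset.univ i (fun i' => F (R i'))]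
      simp
    simp_rw [hsplit]
    rw [aux_pi_prod (fun _ : Fin m => μd) (fun i' r => if i' = i then F r else 1)]
    have hfactor : ∀ i' : Fin m,
        (∫ r, (if i' = i then F r else 1) ∂μd) = if i' = i then ∫ r, F r ∂μd else 1 := by
      intro i'
      split_ifs with h
      · rfl
      · simp
    simp_rw [hfactor]
    rw [Finset.prod_ite_eq' Finset.univ i (fun _ => ∫ r, F r ∂μd)]
    simp
  -- integrability of each summand
  have hintable : ∀ i : Fin m, Integrable
      (fun R : Fin m → Fin d → ℝ => Real.cos (2 * π * ∑ j, R i j * (x j - x' j)))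
      (Measure.pi fun _ : Fin m => μd) := by
    intro i
    refine Integrable.mono' (integrable_const 1)
      ((Real.continuous_cos.comp (continuous_const.mul (continuous_finset_sum _ fun j _ =>
        (continuous_apply_apply i j).mul
          continuous_const))).aestronglyMeasurable)
      (ae_of_all _ fun R => ?_)
    rw [Real.norm_eq_abs]
    exact Real.abs_cos_le_one _
  rw [MeasureTheory.integral_const_mul, MeasureTheory.integral_finset_sum _ fun i _ => hintable i]
  simp_rw [hmarg]
  rw [Finset.sum_const, Finset.card_univ, Fintype.card_fin, nsmul_eq_mul, hF]
  have hm' : (m : ℝ) ≠ 0 := Nat.cast_ne_zero.mpr (by omega)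
  field_simp
end

section
/- Let Φ be a real q×n matrix, let Λ be a real symmetric positive definite q×q matrix, and let σ > 0. Define Γ := Φ Φᵀ + σ² Λ⁻¹. Then Φᵀ Λ Φ + σ²·I (an n×n matrix) and Γ are both invertible, and (Φᵀ Λ Φ + σ²·I)⁻¹ = σ⁻² · (I − Φᵀ Γ⁻¹ Φ). -/
open Matrix

lemma posDef_smul_aux {n : Type*} [Fintype n] {M : Matrix n n ℝ} (hM : M.PosDef)
    {c : ℝ} (hc : 0 < c) : (c • M).PosDef := by
  refine ⟨by rw [Matrix.IsHermitian, conjTranspose_smul, hM.1.eq]; simp, fun x hx => ?_⟩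
  convert mul_pos hc (hM.2 hx) using 1
  simp only [Finsupp.mul_sum, Matrix.smul_apply, smul_eq_mul]
  exact Finsupp.sum_congr fun i _ => Finsupp.sum_congr fun j _ => by ring

/-- Matrix inversion lemma identity for the sparse spectrum GP:
with `Γ := Φ Φᵀ + σ² Λ⁻¹`, both `Φᵀ Λ Φ + σ² I` and `Γ` are invertible and
`(Φᵀ Λ Φ + σ² I)⁻¹ = σ⁻² (I − Φᵀ Γ⁻¹ Φ)`. -/
theorem matrix_inversion_lemma_ssgp {q n : Type*} [Fintype q] [Fintype n]
    [DecidableEq q] [DecidableEq n]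
    (Φ : Matrix q n ℝ) (Λ : Matrix q q ℝ) (hΛ : Λ.PosDef)
    (σ : ℝ) (hσ : 0 < σ) :
    IsUnit (Φᵀ * Λ * Φ + σ ^ 2 • (1 : Matrix n n ℝ)).det ∧
    IsUnit (Φ * Φᵀ + σ ^ 2 • Λ⁻¹).det ∧
    (Φᵀ * Λ * Φ + σ ^ 2 • (1 : Matrix n n ℝ))⁻¹
      = σ⁻¹ ^ 2 • ((1 : Matrix n n ℝ) - Φᵀ * (Φ * Φᵀ + σ ^ 2 • Λ⁻¹)⁻¹ * Φ) := by
  have hσ2 : (0:ℝ) < σ ^ 2 := pow_pos hσ 2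
  have hT : Φᵀ = Φᴴ := (Matrix.conjTranspose_eq_transpose_of_trivial Φ).symm
  -- Positive definiteness of Ξ
  have h1 : (Φᵀ * Λ * Φ).PosSemidef := by
    rw [hT]; exact hΛ.posSemidef.conjTranspose_mul_mul_same Φ
  have hI1 : ((σ ^ 2) • (1 : Matrix n n ℝ)).PosDef :=
    posDef_smul_aux Matrix.PosDef.one hσ2
  have hΞ : (Φᵀ * Λ * Φ + σ ^ 2 • (1 : Matrix n n ℝ)).PosDef := Matrix.PosDef.posSemidef_add h1 hI1
  -- Positive definiteness of Γ
  have h2 : (Φ * Φᵀ).PosSemidef := by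
    rw [hT]; exact Matrix.posSemidef_self_mul_conjTranspose Φ
  have hΓ : (Φ * Φᵀ + σ ^ 2 • Λ⁻¹).PosDef := Matrix.PosDef.posSemidef_add h2 (posDef_smul_aux hΛ.inv hσ2)
  refine ⟨hΞ.det_pos.ne'.isUnit, hΓ.det_pos.ne'.isUnit, ?_⟩
  set Γ := Φ * Φᵀ + σ ^ 2 • Λ⁻¹ with hΓdef
  have hΓΓ : Γ * Γ⁻¹ = 1 := Matrix.mul_nonsing_inv Γ hΓ.det_pos.ne'.isUnit
  have hΛΛ : Λ * Λ⁻¹ = 1 := Matrix.mul_nonsing_inv Λ hΛ.det_pos.ne'.isUnit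
  have key : Φᵀ * Λ * Φ * (Φᵀ * Γ⁻¹ * Φ) + σ ^ 2 • (Φᵀ * Γ⁻¹ * Φ) = Φᵀ * Λ * Φ := by
    have : Φᵀ * Λ * Φ * Φᵀ + σ ^ 2 • Φᵀ = Φᵀ * Λ * Γ := by
      rw [hΓdef, Matrix.mul_add, Matrix.mul_smul, Matrix.mul_assoc (Φᵀ * Λ) Φ Φᵀ,
        Matrix.mul_assoc Φᵀ Λ Λ⁻¹, hΛΛ, Matrix.mul_one]
    calc Φᵀ * Λ * Φ * (Φᵀ * Γ⁻¹ * Φ) + σ ^ 2 • (Φᵀ * Γ⁻¹ * Φ)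
        = (Φᵀ * Λ * Φ * Φᵀ + σ ^ 2 • Φᵀ) * (Γ⁻¹ * Φ) := by
          rw [Matrix.add_mul, Matrix.smul_mul]
          simp [Matrix.mul_assoc]
      _ = Φᵀ * Λ * (Γ * Γ⁻¹) * Φ := by rw [this]; simp [Matrix.mul_assoc]
      _ = Φᵀ * Λ * Φ := by rw [hΓΓ, Matrix.mul_one]
  apply Matrix.inv_eq_right_inv
  have hexp : (Φᵀ * Λ * Φ + σ ^ 2 • (1 : Matrix n n ℝ)) *
      (σ⁻¹ ^ 2 • ((1 : Matrix n n ℝ) - Φᵀ * Γ⁻¹ * Φ)) =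
      σ⁻¹ ^ 2 • ((Φᵀ * Λ * Φ + σ ^ 2 • (1 : Matrix n n ℝ)) -
        (Φᵀ * Λ * Φ * (Φᵀ * Γ⁻¹ * Φ) + σ ^ 2 • (Φᵀ * Γ⁻¹ * Φ))) := by
    rw [Matrix.mul_smul, Matrix.mul_sub, Matrix.mul_one]
    congr 1
    rw [Matrix.add_mul, Matrix.smul_mul, Matrix.one_mul]
  rw [hexp, key]
  rw [show (Φᵀ * Λ * Φ + σ ^ 2 • (1 : Matrix n n ℝ)) - Φᵀ * Λ * Φ = σ ^ 2 • 1 by abel]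
  rw [smul_smul]
  rw [show σ⁻¹ ^ 2 * σ ^ 2 = 1 by field_simp]
  exact one_smul _ _
end

section
/- Let m ∈ ℝ, v ≥ 0, and γ ∈ ℝ with |γ| ≤ 1. Then the Gaussian mixture obtained by drawing x from the Gaussian measure with mean m and variance v and then returning a sample from the Gaussian measure with mean γ·x + (1−γ)·m and variance (1−γ²)·v equals the Gaussian measure with mean m and variance v; formally, (gaussianReal m v).bind (fun x => gaussianReal (γ·x + (1−γ)·m) ((1−γ²)·v)) = gaussianReal m v. -/
open MeasureTheory ProbabilityTheory Real
open scoped NNReal ENNReal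

lemma gauss_conv_real (v1 v2 : ℝ) (h1 : 0 < v1) (h2 : 0 < v2) (m y : ℝ) :
    ∫ x : ℝ, (√(2*π*v1))⁻¹ * rexp (-(x-m)^2/(2*v1)) *
        ((√(2*π*v2))⁻¹ * rexp (-(y-x)^2/(2*v2)))
      = (√(2*π*(v1+v2)))⁻¹ * rexp (-(y-m)^2/(2*(v1+v2))) := by
  have hpi := Real.pi_pos
  have h1' : v1 ≠ 0 := ne_of_gt h1
  have h2' : v2 ≠ 0 := ne_of_gt h2
  have hs' : v1 + v2 ≠ 0 := by positivity
  have hs'' : v2 + v1 ≠ 0 := by positivity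
  set b : ℝ := (v1+v2)/(2*v1*v2) with hbdef
  have hb : 0 < b := by positivity
  set x0 : ℝ := (v2*m + v1*y)/(v1+v2) with hx0
  have key : ∀ x : ℝ, (√(2*π*v1))⁻¹ * rexp (-(x-m)^2/(2*v1)) *
        ((√(2*π*v2))⁻¹ * rexp (-(y-x)^2/(2*v2)))
      = ((√(2*π*v1))⁻¹ * (√(2*π*v2))⁻¹ * rexp (-(y-m)^2/(2*(v1+v2))))
        * rexp (-b * (x-x0)^2) := by
    intro x
    have hexp : rexp (-(x-m)^2/(2*v1)) * rexp (-(y-x)^2/(2*v2))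
        = rexp (-(y-m)^2/(2*(v1+v2))) * rexp (-b * (x-x0)^2) := by
      rw [← Real.exp_add, ← Real.exp_add]
      congr 1
      rw [hbdef, hx0]
      field_simp
      ring
    calc (√(2*π*v1))⁻¹ * rexp (-(x-m)^2/(2*v1)) *
        ((√(2*π*v2))⁻¹ * rexp (-(y-x)^2/(2*v2)))
        = (√(2*π*v1))⁻¹ * (√(2*π*v2))⁻¹ *
          (rexp (-(x-m)^2/(2*v1)) * rexp (-(y-x)^2/(2*v2))) := by ring
      _ = (√(2*π*v1))⁻¹ * (√(2*π*v2))⁻¹ *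
          (rexp (-(y-m)^2/(2*(v1+v2))) * rexp (-b * (x-x0)^2)) := by rw [hexp]
      _ = ((√(2*π*v1))⁻¹ * (√(2*π*v2))⁻¹ * rexp (-(y-m)^2/(2*(v1+v2))))
          * rexp (-b * (x-x0)^2) := by ring
  simp_rw [key]
  rw [integral_const_mul]
  have hint : ∫ x : ℝ, rexp (-b * (x-x0)^2) = √(π/b) := by
    rw [← integral_gaussian b]
    exact integral_sub_right_eq_self (fun x => rexp (-b * x^2)) x0
  rw [hint]
  have hc : (√(2*π*v1))⁻¹ * (√(2*π*v2))⁻¹ * √(π/b) = (√(2*π*(v1+v2)))⁻¹ := by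
    rw [hbdef, ← Real.sqrt_inv, ← Real.sqrt_inv, ← Real.sqrt_inv,
      ← Real.sqrt_mul (by positivity), ← Real.sqrt_mul (by positivity)]
    congr 1
    field_simp
  calc (√(2*π*v1))⁻¹ * (√(2*π*v2))⁻¹ * rexp (-(y-m)^2/(2*(v1+v2))) * √(π/b)
      = (√(2*π*v1))⁻¹ * (√(2*π*v2))⁻¹ * √(π/b) * rexp (-(y-m)^2/(2*(v1+v2))) := by ring
    _ = (√(2*π*(v1+v2)))⁻¹ * rexp (-(y-m)^2/(2*(v1+v2))) := by rw [hc]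

lemma measurable_gaussianPDF_pair (v : ℝ≥0) :
    Measurable (fun p : ℝ × ℝ => gaussianPDF p.1 v p.2) := by
  unfold gaussianPDF gaussianPDFReal
  apply Measurable.ennreal_ofReal
  fun_prop

lemma measurable_gaussianReal' (v : ℝ≥0) :
    Measurable (fun μ : ℝ => gaussianReal μ v) := by
  by_cases hv : v = 0
  · subst hv
    simp only [gaussianReal_zero_var]
    exact Measure.measurable_dirac
  · apply Measure.measurable_of_measurable_coe
    intro s hs
    simp_rw [gaussianReal_of_var_ne_zero _ hv, withDensity_apply _ hs,
      ← lintegral_indicator hs]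
    have : ∀ μ x : ℝ, s.indicator (gaussianPDF μ v) x
        = (Prod.snd ⁻¹' s : Set (ℝ × ℝ)).indicator
            (fun p : ℝ × ℝ => gaussianPDF p.1 v p.2) (μ, x) := by
      intro μ x
      by_cases hx : x ∈ s <;> simp [Set.indicator, hx]
    simp_rw [this]
    exact Measurable.lintegral_prod_right'
      (((measurable_gaussianPDF_pair v).indicator (measurable_snd hs)))

lemma integrable_conv (v1 v2 : ℝ≥0) (m y : ℝ) :
    Integrable (fun x => gaussianPDFReal m v1 x * gaussianPDFReal x v2 y) := by
  have hcomm : (fun x => gaussianPDFReal m v1 x * gaussianPDFReal x v2 y)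
      = fun x => gaussianPDFReal x v2 y * gaussianPDFReal m v1 x := by
    ext x; ring
  rw [hcomm]
  apply (integrable_gaussianPDFReal m v1).bdd_mul (c := (√(2*π*v2))⁻¹)
  · exact (Measurable.aestronglyMeasurable (by unfold gaussianPDFReal; fun_prop))
  · refine ae_of_all _ (fun x => ?_)
    rw [Real.norm_eq_abs, abs_of_nonneg (gaussianPDFReal_nonneg _ _ _)]
    unfold gaussianPDFReal
    have h2 : (0:ℝ) ≤ (√(2*π*v2))⁻¹ := by positivity
    calc (√(2*π*↑v2))⁻¹ * rexp (-(y-x)^2/(2*v2)) ≤ (√(2*π*↑v2))⁻¹ * 1 := by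
          apply mul_le_mul_of_nonneg_left _ h2
          rw [Real.exp_le_one_iff, neg_div]
          exact neg_nonpos.mpr (by positivity)
      _ = (√(2*π*↑v2))⁻¹ := mul_one _

lemma lint_conv (v1 v2 : ℝ≥0) (h1 : v1 ≠ 0) (h2 : v2 ≠ 0) (m y : ℝ) :
    ∫⁻ x, gaussianPDF m v1 x * gaussianPDF x v2 y = gaussianPDF m (v1+v2) y := by
  have h1' : (0:ℝ) < v1 := by positivity
  have h2' : (0:ℝ) < v2 := by positivity
  simp_rw [gaussianPDF, ← ENNReal.ofReal_mul (gaussianPDFReal_nonneg m v1 _)]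
  rw [← ofReal_integral_eq_lintegral_ofReal (integrable_conv v1 v2 m y)
    (ae_of_all _ (fun x => mul_nonneg (gaussianPDFReal_nonneg _ _ _)
      (gaussianPDFReal_nonneg _ _ _)))]
  congr 1
  have := gauss_conv_real v1 v2 h1' h2' m y
  unfold gaussianPDFReal
  push_cast
  rw [this]

lemma gaussianReal_bind_gaussianReal (m : ℝ) (v1 v2 : ℝ≥0) :
    (gaussianReal m v1).bind (fun x => gaussianReal x v2)
      = gaussianReal m (v1 + v2) := by
  by_cases h1 : v1 = 0
  · subst h1
    rw [zero_add, gaussianReal_zero_var, Measure.dirac_bind (measurable_gaussianReal' v2)]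
  by_cases h2 : v2 = 0
  · subst h2
    simp_rw [gaussianReal_zero_var, add_zero]
    exact Measure.bind_dirac
  have h12 : v1 + v2 ≠ 0 := by simp [h1]
  ext s hs
  rw [Measure.bind_apply hs (measurable_gaussianReal' v2).aemeasurable,
    gaussianReal_of_var_ne_zero m h1]
  have hg : Measurable fun x : ℝ => gaussianReal x v2 s :=
    (Measure.measurable_coe hs).comp (measurable_gaussianReal' v2)
  rw [lintegral_withDensity_eq_lintegral_mul _ (measurable_gaussianPDF m v1) hg]
  simp only [Pi.mul_apply, Function.comp]
  have hker : ∀ x : ℝ, gaussianReal x v2 s = ∫⁻ y in s, gaussianPDF x v2 y :=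
    fun x => gaussianReal_apply x h2 s
  simp_rw [hker]
  have hmul : ∀ x : ℝ, gaussianPDF m v1 x * ∫⁻ y in s, gaussianPDF x v2 y
      = ∫⁻ y in s, gaussianPDF m v1 x * gaussianPDF x v2 y := by
    intro x
    rw [lintegral_const_mul _ (measurable_gaussianPDF x v2)]
  simp_rw [hmul]
  rw [lintegral_lintegral_swap]
  · have : ∀ y : ℝ, ∫⁻ x, gaussianPDF m v1 x * gaussianPDF x v2 y
        = gaussianPDF m (v1+v2) y := fun y => lint_conv v1 v2 h1 h2 m y
    simp_rw [this]
    rw [gaussianReal_apply m h12 s]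
  · apply Measurable.aemeasurable
    exact ((measurable_gaussianPDF m v1).comp measurable_fst).mul
      (measurable_gaussianPDF_pair v2)

lemma bind_map_meas {α β γ : Type*} [MeasurableSpace α] [MeasurableSpace β]
    [MeasurableSpace γ] (μ : Measure α) {f : α → β} {g : β → Measure γ}
    (hf : Measurable f) (hg : Measurable g) :
    (μ.map f).bind g = μ.bind (fun x => g (f x)) := by
  ext s hs
  rw [Measure.bind_apply hs hg.aemeasurable, Measure.bind_apply hs (show Measurable fun x => g (f x) from hg.comp hf).aemeasurable,
    lintegral_map (show Measurable fun a : β => g a s from (Measure.measurable_coe hs).comp hg) hf]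

/-- Scalar consistency identity of Proposition 1: for `|γ| ≤ 1`, drawing
`x ∼ N(m, v)` and then returning a sample from
`N(γ x + (1−γ) m, (1−γ²) v)` yields exactly `N(m, v)`. -/
theorem gaussianReal_bind_gamma_family (m : ℝ) (v : ℝ≥0) (γ : ℝ)
    (hγ : |γ| ≤ 1) :
    (gaussianReal m v).bind
        (fun x => gaussianReal (γ * x + (1 - γ) * m)
          (Real.toNNReal (1 - γ ^ 2) * v))
      = gaussianReal m v := by
  have hγ2 : γ ^ 2 ≤ 1 := by
    rw [← abs_of_nonneg (by positivity : (0:ℝ) ≤ γ ^ 2), abs_pow] at *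
    calc |γ| ^ 2 ≤ 1 ^ 2 := pow_le_pow_left₀ (abs_nonneg γ) hγ 2
      _ = 1 := one_pow 2
  set v2 : ℝ≥0 := Real.toNNReal (1 - γ ^ 2) * v with hv2
  have hmeasf : Measurable (fun x : ℝ => γ * x + (1 - γ) * m) :=
    (measurable_id.const_mul γ).add_const _
  have hcomp : (fun x : ℝ => gaussianReal (γ * x + (1 - γ) * m) v2)
      = fun x => (fun c => gaussianReal c v2) ((fun x : ℝ => γ * x + (1 - γ) * m) x) := rfl
  rw [hcomp, ← bind_map_meas _ hmeasf (measurable_gaussianReal' v2)]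
  have hmap : (gaussianReal m v).map (fun x => γ * x + (1 - γ) * m)
      = gaussianReal m (⟨γ ^ 2, sq_nonneg γ⟩ * v) := by
    have : (fun x : ℝ => γ * x + (1 - γ) * m) = (fun y => y + (1 - γ) * m) ∘ (fun x => γ * x) := rfl
    rw [this, ← Measure.map_map (measurable_add_const ((1-γ)*m)) (measurable_const_mul γ),
      gaussianReal_map_const_mul, gaussianReal_map_add_const]
    congr 1
    ring
  rw [hmap, gaussianReal_bind_gaussianReal]
  congr 1
  apply NNReal.coe_injective
  rw [hv2]
  push_cast
  rw [Real.coe_toNNReal _ (by linarith : (0:ℝ) ≤ 1 - γ ^ 2)]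
  have e : ((⟨γ ^ 2, sq_nonneg γ⟩ * v : ℝ≥0) : ℝ) = γ ^ 2 * v := rfl
  linear_combination e
end

section
/- Let q, n ∈ ℕ, let Φ be a real q×n matrix, let Λ be a real symmetric positive definite q×q matrix, and let σ > 0. Assume the n×n matrix Φᵀ Λ Φ + σ²·I is positive definite. Then the pushforward under the map (s, ε) ↦ Φᵀ·s + ε of the product of the multivariate Gaussian measure on ℝ^q with mean 0 and covariance Λ and the multivariate Gaussian measure on ℝⁿ with mean 0 and covariance σ²·I equals the multivariate Gaussian measure on ℝⁿ with mean 0 and covariance Φᵀ Λ Φ + σ²·I. -/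
open MeasureTheory ProbabilityTheory Matrix
open scoped NNReal

/-- The multivariate Gaussian probability measure on `d`-dimensional Euclidean
space with mean vector `μ` and (symmetric positive definite) covariance matrix
`S`, defined via its density with respect to Lebesgue measure. -/
noncomputable def multivariateGaussian {d : ℕ} (μ : EuclideanSpace ℝ (Fin d))
    (S : Matrix (Fin d) (Fin d) ℝ) :
    Measure (EuclideanSpace ℝ (Fin d)) :=
  MeasureTheory.volume.withDensity fun x =>
    ENNReal.ofReal ((Real.sqrt ((2 * Real.pi) ^ d * S.det))⁻¹ *
      Real.exp (-(1 / 2) *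
        ((fun i => (x - μ) i) ⬝ᵥ S⁻¹.mulVec fun i => (x - μ) i)))

namespace GaussAux

open scoped ENNReal

variable {ι κ : Type*} [Fintype ι] [Fintype κ] [DecidableEq ι] [DecidableEq κ]

lemma sqrt_pow_nat {a : ℝ} (ha : 0 ≤ a) (d : ℕ) : Real.sqrt (a ^ d) = Real.sqrt a ^ d := by
  rw [show a ^ d = (Real.sqrt a ^ d) ^ 2 by
      rw [← pow_mul, mul_comm d 2, pow_mul, Real.sq_sqrt ha],
    Real.sqrt_sq (pow_nonneg (Real.sqrt_nonneg a) d)]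

/-- Density of the centered Gaussian on plain pi space. -/
noncomputable def gdens (S : Matrix ι ι ℝ) (x : ι → ℝ) : ℝ :=
  (Real.sqrt ((2 * Real.pi) ^ (Fintype.card ι) * S.det))⁻¹ *
    Real.exp (-(1 / 2) * (x ⬝ᵥ S⁻¹.mulVec x))

lemma gdens_nonneg (S : Matrix ι ι ℝ) (x : ι → ℝ) : 0 ≤ gdens S x := by
  unfold gdens; positivity

lemma continuous_gdens (S : Matrix ι ι ℝ) : Continuous (gdens S) := by
  unfold gdens
  refine continuous_const.mul (Real.continuous_exp.comp (continuous_const.mul ?_))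
  simp only [dotProduct, mulVec]
  exact continuous_finset_sum _ fun i _ => (continuous_apply i).mul
    (continuous_finset_sum _ fun j _ => continuous_const.mul (continuous_apply j))

lemma measurable_gdens (S : Matrix ι ι ℝ) :
    Measurable fun x => ENNReal.ofReal (gdens S x) :=
  ENNReal.measurable_ofReal.comp (continuous_gdens S).measurable

/-- The centered Gaussian measure on plain pi space. -/
noncomputable def gauss (S : Matrix ι ι ℝ) : Measure (ι → ℝ) :=
  MeasureTheory.volume.withDensity fun x => ENNReal.ofReal (gdens S x)

instance (S : Matrix ι ι ℝ) : SigmaFinite (gauss S) := by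
  unfold gauss
  exact SigmaFinite.withDensity_ofReal _

lemma map_withDensity_comp {α β : Type*} [MeasurableSpace α] [MeasurableSpace β]
    (μ : Measure α) {f : α → β} (hf : Measurable f) {g : β → ℝ≥0∞} (hg : Measurable g) :
    Measure.map f (μ.withDensity (g ∘ f)) = (Measure.map f μ).withDensity g := by
  ext s hs
  rw [Measure.map_apply hf hs, withDensity_apply _ (hf hs), withDensity_apply _ hs,
    setLIntegral_map hs hg hf]
  rfl

lemma prod_withDensity {α β : Type*} [MeasurableSpace α] [MeasurableSpace β]
    (μ : Measure α) (ν : Measure β) [SigmaFinite μ] [SigmaFinite ν]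
    {f : α → ℝ≥0∞} {g : β → ℝ≥0∞} (hf : Measurable f) (hg : Measurable g)
    [SigmaFinite (μ.withDensity f)] [SigmaFinite (ν.withDensity g)] :
    (μ.withDensity f).prod (ν.withDensity g)
      = (μ.prod ν).withDensity (fun p => f p.1 * g p.2) := by
  refine Measure.prod_eq fun s t hs ht => ?_
  rw [withDensity_apply _ (hs.prod ht), ← Measure.prod_restrict,
    lintegral_prod_mul hf.aemeasurable hg.aemeasurable,
    withDensity_apply _ hs, withDensity_apply _ ht]

lemma mulVec_continuous (M : Matrix ι κ ℝ) : Continuous fun x : κ → ℝ => M *ᵥ x := by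
  refine continuous_pi fun i => ?_
  simp only [Matrix.mulVec, dotProduct]
  exact continuous_finset_sum _ fun j _ => continuous_const.mul (continuous_apply j)

lemma gdens_comp_mulVec {A S : Matrix ι ι ℝ} (hS : 0 ≤ S.det) (y : ι → ℝ) :
    |A.det|⁻¹ * gdens S (A⁻¹ *ᵥ y) = gdens (A * S * Aᵀ) y := by
  have hdet : (A * S * Aᵀ).det = A.det ^ 2 * S.det := by
    simp [Matrix.det_mul, Matrix.det_transpose]; ring
  unfold gdens
  have hconst : Real.sqrt ((2 * Real.pi) ^ (Fintype.card ι) * (A * S * Aᵀ).det)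
      = Real.sqrt ((2 * Real.pi) ^ (Fintype.card ι) * S.det) * |A.det| := by
    rw [hdet,
      show (2 * Real.pi) ^ (Fintype.card ι) * (A.det ^ 2 * S.det)
        = ((2 * Real.pi) ^ (Fintype.card ι) * S.det) * A.det ^ 2 by ring,
      Real.sqrt_mul (by positivity), Real.sqrt_sq_eq_abs]
  have hquad : (A⁻¹ *ᵥ y) ⬝ᵥ S⁻¹ *ᵥ (A⁻¹ *ᵥ y) = y ⬝ᵥ (A * S * Aᵀ)⁻¹ *ᵥ y := by
    rw [Matrix.mul_inv_rev, Matrix.mul_inv_rev, ← Matrix.transpose_nonsing_inv]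
    rw [← Matrix.mulVec_mulVec, ← Matrix.mulVec_mulVec]
    have h : ∀ z, y ⬝ᵥ (A⁻¹)ᵀ *ᵥ z = (A⁻¹ *ᵥ y) ⬝ᵥ z := fun z => by
      rw [Matrix.dotProduct_mulVec, Matrix.vecMul_transpose]
    rw [h]
  rw [hconst, hquad, mul_inv]
  ring

/-- Change of variables for the Gaussian measure on pi space. -/
lemma map_mulVec_gauss {A S : Matrix ι ι ℝ} (hA : IsUnit A.det) (hS : 0 ≤ S.det) :
    Measure.map (fun x => A *ᵥ x) (gauss S) = gauss (A * S * Aᵀ) := by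
  have hAne : A.det ≠ 0 := by
    intro h; rw [h] at hA; simpa using hA
  have hg : Measurable fun y => ENNReal.ofReal (gdens S (A⁻¹ *ᵥ y)) :=
    (measurable_gdens S).comp (mulVec_continuous A⁻¹).measurable
  have hfun : (fun x => ENNReal.ofReal (gdens S x))
      = (fun y => ENNReal.ofReal (gdens S (A⁻¹ *ᵥ y))) ∘ (fun x => A *ᵥ x) := by
    funext x
    simp only [Function.comp_apply, Matrix.mulVec_mulVec, Matrix.nonsing_inv_mul A hA,
      Matrix.one_mulVec]
  have hvol : Measure.map (fun x : ι → ℝ => A *ᵥ x) volume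
      = ENNReal.ofReal |A.det⁻¹| • volume := by
    have hco : (fun x : ι → ℝ => A *ᵥ x) = ⇑(Matrix.toLin' A) := by
      funext x; rw [Matrix.toLin'_apply]
    rw [hco]
    exact Real.map_matrix_volume_pi_eq_smul_volume_pi hAne
  rw [gauss, hfun, map_withDensity_comp _ (mulVec_continuous A).measurable hg, hvol,
    withDensity_smul_measure, gauss]
  rw [← withDensity_smul _ hg]
  congr 1
  funext y
  simp only [Pi.smul_apply, smul_eq_mul]
  rw [← ENNReal.ofReal_mul (abs_nonneg _), abs_inv]
  rw [gdens_comp_mulVec hS y]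

lemma gauss_one_univ : gauss (1 : Matrix ι ι ℝ) Set.univ = 1 := by
  have h2π : (0:ℝ) < 2 * Real.pi := by positivity
  set c : ℝ := (Real.sqrt (2 * Real.pi))⁻¹ with hc
  have hf : ∀ x : ι → ℝ, gdens (1 : Matrix ι ι ℝ) x
      = ∏ i, c * Real.exp (-(2⁻¹) * (x i) ^ 2) := by
    intro x
    unfold gdens
    rw [Finset.prod_mul_distrib, Finset.prod_const]
    rw [Matrix.det_one, mul_one, inv_one, Matrix.one_mulVec]
    congr 1
    · rw [sqrt_pow_nat h2π.le, ← inv_pow, Finset.card_univ]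
    · rw [← Real.exp_sum]
      congr 1
      rw [dotProduct, Finset.mul_sum]
      refine Finset.sum_congr rfl fun i _ => by ring
  have hint1 : Integrable (fun t : ℝ => c * Real.exp (-(2⁻¹) * t ^ 2)) :=
    (integrable_exp_neg_mul_sq (by norm_num : (0:ℝ) < 2⁻¹)).const_mul c
  have hint : Integrable (fun x : ι → ℝ => ∏ i, c * Real.exp (-(2⁻¹) * (x i) ^ 2)) :=
    Integrable.fintype_prod (fun _ => hint1)
  have h1 : (∫ t : ℝ, c * Real.exp (-(2⁻¹) * t ^ 2)) = 1 := by
    rw [MeasureTheory.integral_const_mul, integral_gaussian]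
    rw [show Real.pi / 2⁻¹ = 2 * Real.pi by ring]
    rw [hc, inv_mul_cancel₀ (Real.sqrt_pos.mpr h2π).ne']
  rw [gauss, withDensity_apply _ MeasurableSet.univ, setLIntegral_univ]
  calc ∫⁻ x : ι → ℝ, ENNReal.ofReal (gdens 1 x)
      = ∫⁻ x : ι → ℝ, ENNReal.ofReal (∏ i, c * Real.exp (-(2⁻¹) * (x i) ^ 2)) := by
        refine lintegral_congr fun x => by rw [hf x]
    _ = ENNReal.ofReal (∫ x : ι → ℝ, ∏ i, c * Real.exp (-(2⁻¹) * (x i) ^ 2)) := by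
        rw [ofReal_integral_eq_lintegral_ofReal hint]
        exact Filter.Eventually.of_forall fun x => Finset.prod_nonneg fun i _ => by positivity
    _ = 1 := by
        rw [MeasureTheory.volume_pi, integral_fintype_prod_eq_pow (ι := ι) (fun t : ℝ => c * Real.exp (-(2⁻¹) * t ^ 2)), h1,
          one_pow, ENNReal.ofReal_one]

lemma conjTranspose_eq_transpose (M : Matrix ι ι ℝ) : Mᴴ = Mᵀ := rfl

open scoped MatrixOrder in
lemma gauss_univ {S : Matrix ι ι ℝ} (hS : S.PosDef) : gauss S Set.univ = 1 := by
  set B := CFC.sqrt S with hB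
  have hB2 : B * B = S := CFC.sqrt_mul_sqrt_self S hS.posSemidef.nonneg
  have hBt : Bᵀ = B := (CFC.sqrt_nonneg S).posSemidef.isHermitian.eq
  have hBdet : IsUnit B.det := by
    have hpos := hS.det_pos
    rw [← hB2, Matrix.det_mul] at hpos
    refine isUnit_iff_ne_zero.mpr fun h => ?_
    rw [h] at hpos; simp at hpos
  have hmap := map_mulVec_gauss (S := (1 : Matrix ι ι ℝ)) hBdet (by simp)
  rw [mul_one, hBt, hB2] at hmap
  rw [← hmap, Measure.map_apply (mulVec_continuous B).measurable MeasurableSet.univ,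
    Set.preimage_univ, gauss_one_univ]

lemma gauss_isProbability {S : Matrix ι ι ℝ} (hS : S.PosDef) :
    IsProbabilityMeasure (gauss S) := ⟨gauss_univ hS⟩

/-- Block-diagonal Gaussians split as products. -/
lemma map_sumPiEquivProdPi_gauss {S : Matrix ι ι ℝ} {K : Matrix κ κ ℝ}
    (hS : S.PosDef) (hK : K.PosDef) :
    Measure.map (⇑(MeasurableEquiv.sumPiEquivProdPi (fun _ : ι ⊕ κ => ℝ)))
      (gauss (fromBlocks S 0 0 K)) = (gauss S).prod (gauss K) := by
  set e := MeasurableEquiv.sumPiEquivProdPi (fun _ : ι ⊕ κ => ℝ) with he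
  have hFBinv : (fromBlocks S 0 0 K)⁻¹ = fromBlocks S⁻¹ 0 0 K⁻¹ := by
    refine Matrix.inv_eq_right_inv ?_
    rw [Matrix.fromBlocks_multiply, Matrix.mul_nonsing_inv _ (isUnit_iff_ne_zero.mpr hS.det_pos.ne'),
      Matrix.mul_nonsing_inv _ (isUnit_iff_ne_zero.mpr hK.det_pos.ne')]
    simp [Matrix.fromBlocks_one]
  have hdens : ∀ x : ι ⊕ κ → ℝ,
      gdens (fromBlocks S 0 0 K) x = gdens S (x ∘ Sum.inl) * gdens K (x ∘ Sum.inr) := by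
    intro x
    unfold gdens
    have hconst : Real.sqrt ((2 * Real.pi) ^ (Fintype.card (ι ⊕ κ)) * (fromBlocks S 0 0 K).det)
        = Real.sqrt ((2 * Real.pi) ^ (Fintype.card ι) * S.det)
          * Real.sqrt ((2 * Real.pi) ^ (Fintype.card κ) * K.det) := by
      rw [Matrix.det_fromBlocks_zero₂₁, Fintype.card_sum, pow_add,
        show (2 * Real.pi) ^ (Fintype.card ι) * (2 * Real.pi) ^ (Fintype.card κ) * (S.det * K.det)
          = ((2 * Real.pi) ^ (Fintype.card ι) * S.det)
            * ((2 * Real.pi) ^ (Fintype.card κ) * K.det) by ring,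
        Real.sqrt_mul (by have := hS.det_pos; positivity)]
    have hquad : x ⬝ᵥ (fromBlocks S 0 0 K)⁻¹ *ᵥ x
        = (x ∘ Sum.inl) ⬝ᵥ S⁻¹ *ᵥ (x ∘ Sum.inl) + (x ∘ Sum.inr) ⬝ᵥ K⁻¹ *ᵥ (x ∘ Sum.inr) := by
      rw [hFBinv, Matrix.fromBlocks_mulVec]
      simp only [Matrix.zero_mulVec, add_zero, zero_add]
      rw [dotProduct, Fintype.sum_sum_type]
      simp only [Sum.elim_inl, Sum.elim_inr]
      rfl
    rw [hconst, hquad, mul_inv, show -(1/2 : ℝ) * (((x ∘ Sum.inl) ⬝ᵥ S⁻¹ *ᵥ (x ∘ Sum.inl))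
        + ((x ∘ Sum.inr) ⬝ᵥ K⁻¹ *ᵥ (x ∘ Sum.inr)))
      = -(1/2) * ((x ∘ Sum.inl) ⬝ᵥ S⁻¹ *ᵥ (x ∘ Sum.inl))
        + (-(1/2)) * ((x ∘ Sum.inr) ⬝ᵥ K⁻¹ *ᵥ (x ∘ Sum.inr)) by ring, Real.exp_add]
    ring
  have hmapvol : Measure.map (⇑e) volume = volume := by
    have h1 := MeasureTheory.volume_measurePreserving_sumPiEquivProdPi_symm (fun _ : ι ⊕ κ => ℝ)
    have h2 := h1.symm e.symm
    simpa using h2.map_eq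
  have hgfun : (fun x : ι ⊕ κ → ℝ => ENNReal.ofReal (gdens (fromBlocks S 0 0 K) x))
      = (fun p : (ι → ℝ) × (κ → ℝ) =>
          ENNReal.ofReal (gdens S p.1) * ENNReal.ofReal (gdens K p.2)) ∘ ⇑e := by
    funext x
    simp only [Function.comp_apply]
    rw [hdens x, ENNReal.ofReal_mul (gdens_nonneg S _)]
    rfl
  have hmeas : Measurable fun p : (ι → ℝ) × (κ → ℝ) =>
      ENNReal.ofReal (gdens S p.1) * ENNReal.ofReal (gdens K p.2) :=
    ((measurable_gdens S).comp measurable_fst).mul ((measurable_gdens K).comp measurable_snd)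
  rw [gauss, hgfun, map_withDensity_comp _ e.measurable hmeas, hmapvol]
  rw [gauss, gauss, prod_withDensity volume volume (measurable_gdens S) (measurable_gdens K)]
  rw [MeasureTheory.Measure.volume_eq_prod]


lemma dotProduct_fromBlocks_diag (A : Matrix ι ι ℝ) (B : Matrix κ κ ℝ) (x : ι ⊕ κ → ℝ) :
    star x ⬝ᵥ (fromBlocks A 0 0 B) *ᵥ x
      = star (x ∘ Sum.inl) ⬝ᵥ A *ᵥ (x ∘ Sum.inl) + star (x ∘ Sum.inr) ⬝ᵥ B *ᵥ (x ∘ Sum.inr) := by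
  rw [Matrix.fromBlocks_mulVec]
  simp only [Matrix.zero_mulVec, add_zero, zero_add]
  rw [dotProduct, Fintype.sum_sum_type]
  simp only [Sum.elim_inl, Sum.elim_inr]
  rfl

lemma posDef_fromBlocks {A : Matrix ι ι ℝ} {B : Matrix κ κ ℝ} (hA : A.PosDef) (hB : B.PosDef) :
    (fromBlocks A 0 0 B).PosDef := by
  refine Matrix.PosDef.of_dotProduct_mulVec_pos ?_ ?_
  · show (fromBlocks A 0 0 B)ᴴ = _
    rw [Matrix.fromBlocks_conjTranspose]
    rw [hA.1.eq, hB.1.eq]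
    simp
  · intro x hx
    rw [dotProduct_fromBlocks_diag]
    by_cases h1 : x ∘ Sum.inl = 0
    · have h2 : x ∘ Sum.inr ≠ 0 := by
        intro h2
        apply hx
        funext i
        cases i with
        | inl i => exact congrFun h1 i
        | inr i => exact congrFun h2 i
      have hp := hB.dotProduct_mulVec_pos h2
      have hz : star (x ∘ Sum.inl) ⬝ᵥ A *ᵥ (x ∘ Sum.inl) = 0 := by
        rw [h1]; simp
      rw [hz, zero_add]; exact hp
    · have hp := hA.dotProduct_mulVec_pos h1
      have hq := hB.posSemidef.dotProduct_mulVec_nonneg (x ∘ Sum.inr)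
      linarith

lemma posDef_of_fromBlocks_left {A : Matrix ι ι ℝ} {B : Matrix κ κ ℝ}
    (h : (fromBlocks A 0 0 B).PosDef) : A.PosDef := by
  refine Matrix.PosDef.of_dotProduct_mulVec_pos ?_ ?_
  · have h1 := h.1.eq
    rw [Matrix.fromBlocks_conjTranspose] at h1
    have h2 := congrArg Matrix.toBlocks₁₁ h1
    simpa [Matrix.toBlocks_fromBlocks₁₁, Matrix.IsSymm] using h2
  · intro x hx
    have hy : (Sum.elim x (0 : κ → ℝ)) ≠ 0 := fun h0 => hx (funext fun i => congrFun h0 (Sum.inl i))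
    have hp := h.dotProduct_mulVec_pos hy
    rw [dotProduct_fromBlocks_diag] at hp
    simpa using hp

lemma posDef_of_fromBlocks_right {A : Matrix ι ι ℝ} {B : Matrix κ κ ℝ}
    (h : (fromBlocks A 0 0 B).PosDef) : B.PosDef := by
  refine Matrix.PosDef.of_dotProduct_mulVec_pos ?_ ?_
  · have h1 := h.1.eq
    rw [Matrix.fromBlocks_conjTranspose] at h1
    have h2 := congrArg Matrix.toBlocks₂₂ h1
    simpa [Matrix.toBlocks_fromBlocks₂₂, Matrix.IsSymm] using h2
  · intro x hx
    have hy : (Sum.elim (0 : ι → ℝ) x) ≠ 0 := fun h0 => hx (funext fun i => congrFun h0 (Sum.inr i))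
    have hp := h.dotProduct_mulVec_pos hy
    rw [dotProduct_fromBlocks_diag] at hp
    simpa using hp

lemma posDef_conj {M : Matrix ι ι ℝ} (hM : M.PosDef) {B : Matrix ι ι ℝ} (hB : IsUnit B.det) :
    (B * M * Bᵀ).PosDef := by
  have hMt : Mᵀ = M := hM.1.eq
  refine Matrix.PosDef.of_dotProduct_mulVec_pos ?_ ?_
  · show (B * M * Bᵀ)ᴴ = _
    show (B * M * Bᵀ)ᵀ = _
    rw [Matrix.transpose_mul, Matrix.transpose_mul, Matrix.transpose_transpose, hMt, mul_assoc]
  · intro x hx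
    have hBt : IsUnit Bᵀ.det := by rwa [Matrix.det_transpose]
    have hy : Bᵀ *ᵥ x ≠ 0 := by
      intro h0
      apply hx
      have h1 := congrArg (fun v => (Bᵀ)⁻¹ *ᵥ v) h0
      simpa [Matrix.mulVec_mulVec, Matrix.nonsing_inv_mul _ hBt, Matrix.one_mulVec] using h1
    have hpos := hM.dotProduct_mulVec_pos hy
    have hcomp : star x ⬝ᵥ (B * M * Bᵀ) *ᵥ x = star (Bᵀ *ᵥ x) ⬝ᵥ M *ᵥ (Bᵀ *ᵥ x) := by
      simp only [star_trivial]
      rw [← Matrix.mulVec_mulVec, ← Matrix.mulVec_mulVec, Matrix.dotProduct_mulVec,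
        ← Matrix.mulVec_transpose]
    rw [hcomp]
    exact hpos


/-- Right inverse of the shear-and-decorrelate block matrix. -/
lemma grind_inv (P : Matrix κ ι ℝ) (C : Matrix ι κ ℝ) :
    (fromBlocks (1 - C * P) (-C) P 1) * (fromBlocks 1 C (-P) (1 - P * C))
      = (1 : Matrix (ι ⊕ κ) (ι ⊕ κ) ℝ) := by
  rw [Matrix.fromBlocks_multiply]
  have e1 : (1 - C * P) * 1 + (-C) * (-P) = (1 : Matrix ι ι ℝ) := by
    simp only [Matrix.mul_one, Matrix.neg_mul, Matrix.mul_neg, neg_neg]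
    abel
  have e2 : (1 - C * P) * C + (-C) * (1 - P * C) = (0 : Matrix ι κ ℝ) := by
    simp only [Matrix.sub_mul, Matrix.one_mul, Matrix.neg_mul, Matrix.mul_sub,
      Matrix.mul_one, Matrix.mul_assoc]
    abel
  have e3 : P * (1 : Matrix ι ι ℝ) + (1 : Matrix κ κ ℝ) * (-P) = (0 : Matrix κ ι ℝ) := by
    simp only [Matrix.mul_one, Matrix.one_mul]
    abel
  have e4 : P * C + (1 : Matrix κ κ ℝ) * (1 - P * C) = (1 : Matrix κ κ ℝ) := by
    simp only [Matrix.one_mul]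
    abel
  rw [e1, e2, e3, e4, Matrix.fromBlocks_one]

/-- Conjugating the block-diagonal covariance by the shear-and-decorrelate matrix
yields a block-diagonal covariance. -/
lemma grind_conj (P : Matrix κ ι ℝ) (Λ : Matrix ι ι ℝ) (C : Matrix ι κ ℝ) (N Sg : Matrix κ κ ℝ)
    (hSg : P * (Λ * Pᵀ) + N = Sg)
    (h1 : C * (P * (Λ * Pᵀ)) + C * N = Λ * Pᵀ)
    (h2 : P * (Λ * (Pᵀ * Cᵀ)) + N * Cᵀ = P * Λ) :
    (fromBlocks (1 - C * P) (-C) P 1) * (fromBlocks Λ 0 0 N)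
        * (fromBlocks (1 - C * P) (-C) P 1)ᵀ
      = fromBlocks (Λ - C * (P * Λ)) 0 0 Sg := by
  have h3 : C * (P * (Λ * (Pᵀ * Cᵀ))) + C * (N * Cᵀ) = Λ * (Pᵀ * Cᵀ) := by
    have h4 := congrArg (fun X => X * Cᵀ) h1
    simpa only [Matrix.add_mul, Matrix.mul_assoc] using h4
  rw [Matrix.fromBlocks_transpose, Matrix.transpose_one, Matrix.transpose_neg,
    Matrix.transpose_sub, Matrix.transpose_one, Matrix.transpose_mul,
    Matrix.fromBlocks_multiply, Matrix.fromBlocks_multiply, Matrix.fromBlocks_inj]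
  refine ⟨?_, ?_, ?_, ?_⟩
  · trans (Λ - Λ * (Pᵀ * Cᵀ) - C * (P * Λ)
      + (C * (P * (Λ * (Pᵀ * Cᵀ))) + C * (N * Cᵀ)))
    · simp only [Matrix.mul_zero, Matrix.zero_mul, add_zero, zero_add, Matrix.sub_mul,
        Matrix.mul_sub, Matrix.one_mul, Matrix.mul_one, Matrix.neg_mul, Matrix.mul_neg,
        neg_neg, Matrix.mul_assoc]
      abel
    · rw [h3]; abel
  · trans (Λ * Pᵀ - (C * (P * (Λ * Pᵀ)) + C * N))
    · simp only [Matrix.mul_zero, Matrix.zero_mul, add_zero, zero_add, Matrix.sub_mul,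
        Matrix.mul_sub, Matrix.one_mul, Matrix.mul_one, Matrix.neg_mul, Matrix.mul_neg,
        neg_neg, Matrix.mul_assoc]
      abel
    · rw [h1, sub_self]
  · trans (P * Λ - (P * (Λ * (Pᵀ * Cᵀ)) + N * Cᵀ))
    · simp only [Matrix.mul_zero, Matrix.zero_mul, add_zero, zero_add, Matrix.sub_mul,
        Matrix.mul_sub, Matrix.one_mul, Matrix.mul_one, Matrix.neg_mul, Matrix.mul_neg,
        neg_neg, Matrix.mul_assoc]
      abel
    · rw [h2, sub_self]
  · trans (P * (Λ * Pᵀ) + N)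
    · simp only [Matrix.mul_zero, Matrix.zero_mul, add_zero, zero_add, Matrix.mul_one,
        Matrix.one_mul, Matrix.mul_assoc]
    · exact hSg

lemma multivariateGaussian_eq_map {d : ℕ} (S : Matrix (Fin d) (Fin d) ℝ) :
    _root_.multivariateGaussian 0 S
      = Measure.map (⇑(MeasurableEquiv.toLp 2 (Fin d → ℝ)).symm.symm) (gauss S) := by
  set e := (MeasurableEquiv.toLp 2 (Fin d → ℝ)).symm with he
  have hvol : Measure.map (⇑e.symm) volume = volume :=
    ((EuclideanSpace.volume_preserving_symm_measurableEquiv_toLp (Fin d)).symm e).map_eq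
  have hgfun : (fun x : Fin d → ℝ => ENNReal.ofReal (gdens S x))
      = (fun y : EuclideanSpace ℝ (Fin d) => ENNReal.ofReal (gdens S (⇑e y))) ∘ ⇑e.symm := by
    funext x
    simp
  have hgm : Measurable fun y : EuclideanSpace ℝ (Fin d) => ENNReal.ofReal (gdens S (⇑e y)) :=
    (measurable_gdens S).comp e.measurable
  rw [gauss, hgfun, map_withDensity_comp _ e.symm.measurable hgm, hvol]
  unfold _root_.multivariateGaussian
  congr 1
  funext y
  unfold gdens
  rw [Fintype.card_fin]
  have hy : (fun i => (y - 0) i) = ⇑e y := by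
    funext i
    simp [he, sub_zero]
  rw [hy]

end GaussAux

open GaussAux in
/-- Gaussian marginalization identity of Appendix E: if `s ∼ N(0, Λ)` and
independently `ε ∼ N(0, σ² I)`, then `Φᵀ s + ε ∼ N(0, Φᵀ Λ Φ + σ² I)`. -/
theorem map_affine_noise_multivariateGaussian (q n : ℕ)
    (Φ : Matrix (Fin q) (Fin n) ℝ) (Λ : Matrix (Fin q) (Fin q) ℝ)
    (hΛ : Λ.PosDef) (σ : ℝ) (hσ : 0 < σ)
    (hPD : (Φᵀ * Λ * Φ + σ ^ 2 • (1 : Matrix (Fin n) (Fin n) ℝ)).PosDef) :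
    Measure.map
        (fun p : EuclideanSpace ℝ (Fin q) × EuclideanSpace ℝ (Fin n) =>
          (WithLp.equiv 2 (Fin n → ℝ)).symm
            (Φᵀ.mulVec (WithLp.equiv 2 (Fin q → ℝ) p.1)
              + WithLp.equiv 2 (Fin n → ℝ) p.2))
        ((_root_.multivariateGaussian 0 Λ).prod
          (_root_.multivariateGaussian 0 (σ ^ 2 • (1 : Matrix (Fin n) (Fin n) ℝ))))
      = _root_.multivariateGaussian 0
          (Φᵀ * Λ * Φ + σ ^ 2 • (1 : Matrix (Fin n) (Fin n) ℝ)) := by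
  classical
  set N := σ ^ 2 • (1 : Matrix (Fin n) (Fin n) ℝ) with hNdef
  set Sg := Φᵀ * Λ * Φ + N with hSgdef
  have hN : N.PosDef := by
    rw [hNdef, Matrix.smul_one_eq_diagonal]
    exact Matrix.posDef_diagonal_iff.mpr fun i => by positivity
  have hSgU : IsUnit Sg.det := isUnit_iff_ne_zero.mpr hPD.det_pos.ne'
  have hSgt : Sgᵀ = Sg := hPD.1.eq
  have hΛt : Λᵀ = Λ := hΛ.1.eq
  set C := Λ * Φ * Sg⁻¹ with hCdef
  have hCS : C * Sg = Λ * Φ := by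
    rw [hCdef, Matrix.mul_assoc (Λ * Φ) Sg⁻¹ Sg, Matrix.nonsing_inv_mul _ hSgU, Matrix.mul_one]
  have hCt : Cᵀ = Sg⁻¹ * (Φᵀ * Λ) := by
    rw [hCdef, Matrix.transpose_mul, Matrix.transpose_mul, Matrix.transpose_nonsing_inv,
      hSgt, hΛt]
  have hSCt : Sg * Cᵀ = Φᵀ * Λ := by
    rw [hCt, ← Matrix.mul_assoc Sg Sg⁻¹ (Φᵀ * Λ), Matrix.mul_nonsing_inv _ hSgU, Matrix.one_mul]
  have hPt : Φᵀᵀ = Φ := Matrix.transpose_transpose Φ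
  have hSg1 : Φᵀ * (Λ * Φᵀᵀ) + N = Sg := by
    rw [hSgdef, hPt, ← Matrix.mul_assoc Φᵀ Λ Φ]
  have h1 : C * (Φᵀ * (Λ * Φᵀᵀ)) + C * N = Λ * Φᵀᵀ := by
    rw [hPt, show Φᵀ * (Λ * Φ) = Φᵀ * Λ * Φ from (Matrix.mul_assoc Φᵀ Λ Φ).symm,
      ← Matrix.mul_add, ← hSgdef, hCS]
  have h2 : Φᵀ * (Λ * (Φᵀᵀ * Cᵀ)) + N * Cᵀ = Φᵀ * Λ := by
    rw [hPt, show Φᵀ * (Λ * (Φ * Cᵀ)) = Φᵀ * Λ * Φ * Cᵀ by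
        rw [Matrix.mul_assoc (Φᵀ * Λ) Φ Cᵀ, Matrix.mul_assoc Φᵀ Λ (Φ * Cᵀ)],
      ← Matrix.add_mul, ← hSgdef, hSCt]
  set K := Λ - C * (Φᵀ * Λ) with hKdef
  have key := grind_conj Φᵀ Λ C N Sg hSg1 h1 h2
  have hGdet : IsUnit (fromBlocks (1 - C * Φᵀ) (-C) Φᵀ
      (1 : Matrix (Fin n) (Fin n) ℝ)).det :=
    Matrix.isUnit_det_of_right_inverse (grind_inv Φᵀ C)
  have hD : (fromBlocks Λ 0 0 N).PosDef := posDef_fromBlocks hΛ hN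
  have hFB : (fromBlocks K 0 0 Sg).PosDef := by
    rw [hKdef, ← key]
    exact posDef_conj hD hGdet
  have hK : K.PosDef := posDef_of_fromBlocks_left hFB
  -- measurable equivalences
  set eq := (MeasurableEquiv.toLp 2 (Fin q → ℝ)).symm with heq
  set en := (MeasurableEquiv.toLp 2 (Fin n → ℝ)).symm with hen
  set eS := MeasurableEquiv.sumPiEquivProdPi (fun _ : Fin q ⊕ Fin n => ℝ) with heS
  set G := fromBlocks (1 - C * Φᵀ) (-C) Φᵀ (1 : Matrix (Fin n) (Fin n) ℝ) with hGdef
  have hmapG : Measure.map (fun x : Fin q ⊕ Fin n → ℝ => G *ᵥ x)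
      (gauss (fromBlocks Λ 0 0 N)) = gauss (fromBlocks K 0 0 Sg) := by
    rw [map_mulVec_gauss hGdet hD.det_pos.le, hGdef, key, hKdef]
  set mid := fun y : (Fin q → ℝ) × (Fin n → ℝ) => Φᵀ *ᵥ y.1 + y.2 with hmid
  have hmidm : Measurable mid :=
    (((mulVec_continuous Φᵀ).comp continuous_fst).add continuous_snd).measurable
  have hTfun : (fun p : EuclideanSpace ℝ (Fin q) × EuclideanSpace ℝ (Fin n) =>
      (WithLp.equiv 2 (Fin n → ℝ)).symm
        (Φᵀ.mulVec (WithLp.equiv 2 (Fin q → ℝ) p.1)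
          + WithLp.equiv 2 (Fin n → ℝ) p.2))
      = ⇑en.symm ∘ mid ∘ Prod.map ⇑eq ⇑en := rfl
  rw [multivariateGaussian_eq_map Λ, multivariateGaussian_eq_map N,
    multivariateGaussian_eq_map Sg, hTfun,
    Measure.map_prod_map _ _ eq.symm.measurable en.symm.measurable,
    Measure.map_map (en.symm.measurable.comp
      (hmidm.comp (eq.measurable.prodMap en.measurable)))
      (eq.symm.measurable.prodMap en.symm.measurable)]
  have hcomp : (⇑en.symm ∘ mid ∘ Prod.map ⇑eq ⇑en) ∘ Prod.map ⇑eq.symm ⇑en.symm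
      = ⇑en.symm ∘ mid := by
    funext p
    simp [Prod.map, MeasurableEquiv.apply_symm_apply]
  rw [hcomp, ← map_sumPiEquivProdPi_gauss hΛ hN,
    Measure.map_map (en.symm.measurable.comp hmidm) eS.measurable]
  have hfinal : (⇑en.symm ∘ mid) ∘ ⇑eS
      = ⇑en.symm ∘ (Prod.snd ∘ ⇑eS) ∘ (fun x : Fin q ⊕ Fin n → ℝ => G *ᵥ x) := by
    funext x
    simp only [Function.comp_apply]
    congr 1
    show Φᵀ *ᵥ (eS x).1 + (eS x).2 = (eS (G *ᵥ x)).2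
    rw [heS]
    simp only [MeasurableEquiv.coe_sumPiEquivProdPi, Equiv.sumPiEquivProdPi_apply]
    rw [hGdef, Matrix.fromBlocks_mulVec]
    funext i
    simp only [Matrix.one_mulVec, Sum.elim_inr, Pi.add_apply]
    rfl
  rw [hfinal, ← Measure.map_map en.symm.measurable
      ((measurable_snd.comp eS.measurable).comp (mulVec_continuous G).measurable),
    ← Measure.map_map (measurable_snd.comp eS.measurable)
      (mulVec_continuous G).measurable,
    ← Measure.map_map measurable_snd eS.measurable,
    hmapG, map_sumPiEquivProdPi_gauss hK hPD, Measure.map_snd_prod,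
    gauss_univ hK, one_smul]
end
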